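/- Let w be a graphon with out-degree function d(x) = ∫₀¹ w(x,y) dy satisfying d(x) ≥ d₀ > 0 for all x ∈ [0,1], and suppose that for every a ∈ [0,1], lim_{x → a} ∫₀¹ |w(x,y) − w(a,y)| dy = 0. If φ ∈ L²([0,1]) satisfies (1/d(x)) ∫₀¹ w(x,y) φ(y) dy = λ φ(x) for all x ∈ [0,1] with λ ≠ 0, then φ is continuous on [0,1]. -/

import Mathlib

open MeasureTheory

/-- If the graphon is L¹-continuous in its first argument, then
Koopman eigenfunctions with nonzero eigenvalue are continuous on [0,1]. -/
theorem koopman_eigenfunction_continuous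
    (w : ℝ → ℝ → ℝ)
    (hw_meas : Measurable (Function.uncurry w))
    (hw_range : ∀ x ∈ Set.Icc (0:ℝ) 1, ∀ y ∈ Set.Icc (0:ℝ) 1, w x y ∈ Set.Icc (0:ℝ) 1)
    (d : ℝ → ℝ) (hd : ∀ x, d x = ∫ y in (0:ℝ)..1, w x y)
    (d₀ : ℝ) (hd₀ : 0 < d₀) (hd_lb : ∀ x ∈ Set.Icc (0:ℝ) 1, d₀ ≤ d x)
    (hw_cont : ∀ a ∈ Set.Icc (0:ℝ) 1,
      Filter.Tendsto (fun x => ∫ y in (0:ℝ)..1, |w x y - w a y|)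
        (nhdsWithin a (Set.Icc (0:ℝ) 1)) (nhds 0))
    (φ : ℝ → ℝ) (hφ_L2 : MemLp φ 2 (volume.restrict (Set.Icc (0:ℝ) 1)))
    (l : ℝ) (hl : l ≠ 0)
    (heig : ∀ x ∈ Set.Icc (0:ℝ) 1,
      (1 / d x) * (∫ y in (0:ℝ)..1, w x y * φ y) = l * φ x) :
    ContinuousOn φ (Set.Icc (0:ℝ) 1) := by
  have h01 : (0:ℝ) ≤ 1 := zero_le_one
  set μ := volume.restrict (Set.Ioc (0:ℝ) 1) with hμ
  have hμfin : IsFiniteMeasure μ := ⟨by simp [hμ, Real.volume_Ioc]⟩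
  have hrestr : volume.restrict (Set.Icc (0:ℝ) 1) = μ :=
    (Measure.restrict_congr_set MeasureTheory.Ioc_ae_eq_Icc).symm
  have hφμ : MemLp φ 2 μ := hrestr ▸ hφ_L2
  have hφ_int : Integrable φ μ := hφμ.integrable (by norm_num)
  have hwx_meas : ∀ x, Measurable (w x) := fun x => hw_meas.comp measurable_prodMk_left
  have hIoc_sub : Set.Ioc (0:ℝ) 1 ⊆ Set.Icc 0 1 := Set.Ioc_subset_Icc_self
  have hae_mem : ∀ᵐ y ∂μ, y ∈ Set.Ioc (0:ℝ) 1 := ae_restrict_mem measurableSet_Ioc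
  have habs : ∀ x ∈ Set.Icc (0:ℝ) 1, ∀ y ∈ Set.Ioc (0:ℝ) 1, |w x y| ≤ 1 := by
    intro x hx y hy
    have := hw_range x hx y (hIoc_sub hy)
    exact abs_le.2 ⟨by linarith [this.1], this.2⟩
  -- integrability facts
  have hint_w : ∀ x ∈ Set.Icc (0:ℝ) 1, Integrable (w x) μ := by
    intro x hx
    refine Integrable.mono' (integrable_const (1:ℝ)) (hwx_meas x).aestronglyMeasurable ?_
    filter_upwards [hae_mem] with y hy
    simpa using habs x hx y hy
  have hint_wφ : ∀ x ∈ Set.Icc (0:ℝ) 1, Integrable (fun y => w x y * φ y) μ := by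
    intro x hx
    refine Integrable.mono' hφ_int.abs
      ((hwx_meas x).aestronglyMeasurable.mul hφμ.1) ?_
    filter_upwards [hae_mem] with y hy
    rw [Real.norm_eq_abs, abs_mul]
    calc |w x y| * |φ y| ≤ 1 * |φ y| :=
          mul_le_mul_of_nonneg_right (habs x hx y hy) (abs_nonneg _)
      _ = |φ y| := one_mul _
  -- the L¹ modulus
  set H : ℝ → ℝ → ℝ := fun a x => ∫ y, |w x y - w a y| ∂μ with hH
  have hH_tendsto : ∀ a ∈ Set.Icc (0:ℝ) 1,
      Filter.Tendsto (H a) (nhdsWithin a (Set.Icc (0:ℝ) 1)) (nhds 0) := by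
    intro a ha
    have := hw_cont a ha
    simpa [hH, intervalIntegral.integral_of_le h01] using this
  have hH_nonneg : ∀ a x, 0 ≤ H a x := fun a x =>
    integral_nonneg fun y => abs_nonneg _
  have hint_Δ : ∀ a ∈ Set.Icc (0:ℝ) 1, ∀ x ∈ Set.Icc (0:ℝ) 1,
      Integrable (fun y => |w x y - w a y|) μ := fun a ha x hx =>
    ((hint_w x hx).sub (hint_w a ha)).abs
  -- continuity of d on Icc
  have hd_cont : ContinuousOn d (Set.Icc (0:ℝ) 1) := by
    intro a ha
    have hb : ∀ᶠ x in nhdsWithin a (Set.Icc (0:ℝ) 1), ‖d x - d a‖ ≤ H a x := by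
      filter_upwards [self_mem_nhdsWithin] with x hx
      rw [hd x, hd a, intervalIntegral.integral_of_le h01,
        intervalIntegral.integral_of_le h01, ← hμ,
        ← integral_sub (hint_w x hx) (hint_w a ha)]
      simpa [hH] using norm_integral_le_integral_norm (fun y => w x y - w a y)
    have := squeeze_zero_norm' hb (hH_tendsto a ha)
    have h2 := this.add_const (d a)
    rw [ContinuousWithinAt]
    simpa using h2
  -- continuity of F on Icc
  set F : ℝ → ℝ := fun x => ∫ y, w x y * φ y ∂μ with hF
  set C : ℝ := Real.sqrt (∫ y, |φ y| ^ (2:ℝ) ∂μ) with hC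
  have hφ2 : MemLp (fun y => |φ y|) (ENNReal.ofReal 2) μ := by
    have := hφμ.norm
    simpa [Real.norm_eq_abs, ENNReal.ofReal_ofNat] using this
  have hF_cont : ContinuousOn F (Set.Icc (0:ℝ) 1) := by
    intro a ha
    have hb : ∀ᶠ x in nhdsWithin a (Set.Icc (0:ℝ) 1),
        ‖F x - F a‖ ≤ Real.sqrt (H a x) * C := by
      filter_upwards [self_mem_nhdsWithin] with x hx
      have hsub : F x - F a = ∫ y, (w x y - w a y) * φ y ∂μ := by
        rw [hF, ← integral_sub (hint_wφ x hx) (hint_wφ a ha)]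
        simp [sub_mul]
      rw [hsub]
      have h1 : ‖∫ y, (w x y - w a y) * φ y ∂μ‖
          ≤ ∫ y, |w x y - w a y| * |φ y| ∂μ := by
        have := norm_integral_le_integral_norm (μ := μ) (fun y => (w x y - w a y) * φ y)
        simpa [Real.norm_eq_abs, abs_mul] using this
      refine h1.trans ?_
      -- MemLp for |Δw|
      have hΔmem : MemLp (fun y => |w x y - w a y|) (ENNReal.ofReal 2) μ := by
        refine MemLp.of_bound (((hwx_meas x).sub (hwx_meas a)).abs.aestronglyMeasurable) 2 ?_
        filter_upwards [hae_mem] with y hy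
        rw [Real.norm_eq_abs, abs_abs]
        calc |w x y - w a y| ≤ |w x y| + |w a y| := abs_sub _ _
          _ ≤ 1 + 1 := add_le_add (habs x hx y hy) (habs a ha y hy)
          _ = 2 := by norm_num
      have hconj : Real.HolderConjugate 2 2 := Real.HolderConjugate.two_two
      have hholder := integral_mul_le_Lp_mul_Lq_of_nonneg hconj
        (Filter.Eventually.of_forall (fun y => abs_nonneg (w x y - w a y)))
        (Filter.Eventually.of_forall (fun y => abs_nonneg (φ y))) hΔmem hφ2
      refine hholder.trans ?_
      rw [hC, Real.sqrt_eq_rpow, Real.sqrt_eq_rpow]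
      have hΔle1 : ∀ y ∈ Set.Ioc (0:ℝ) 1, |w x y - w a y| ≤ 1 := by
        intro y hy
        have h1 := hw_range x hx y (hIoc_sub hy)
        have h2 := hw_range a ha y (hIoc_sub hy)
        exact abs_le.2 ⟨by linarith [h1.1, h2.2], by linarith [h1.2, h2.1]⟩
      have hrw : (fun y => |w x y - w a y| ^ (2:ℝ))
          = fun y => |w x y - w a y| * |w x y - w a y| := by
        funext y
        rw [show (2:ℝ) = ((2:ℕ):ℝ) by norm_num, Real.rpow_natCast]
        ring
      have hint_Δ2 : Integrable (fun y => |w x y - w a y| ^ (2:ℝ)) μ := by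
        rw [hrw]
        refine Integrable.mono' (integrable_const (1:ℝ))
          (((((hwx_meas x).sub (hwx_meas a)).abs.mul
            ((hwx_meas x).sub (hwx_meas a)).abs)).aestronglyMeasurable) ?_
        filter_upwards [hae_mem] with y hy
        rw [Real.norm_eq_abs, abs_of_nonneg (mul_nonneg (abs_nonneg _) (abs_nonneg _))]
        calc |w x y - w a y| * |w x y - w a y| ≤ 1 * 1 :=
              mul_le_mul (hΔle1 y hy) (hΔle1 y hy) (abs_nonneg _) zero_le_one
          _ = 1 := one_mul 1
      have hI2 : (∫ y, |w x y - w a y| ^ (2:ℝ) ∂μ) ≤ H a x := by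
        refine integral_mono_ae hint_Δ2 (hint_Δ a ha x hx) ?_
        filter_upwards [hae_mem] with y hy
        rw [show ((2:ℝ)) = ((2:ℕ):ℝ) by norm_num, Real.rpow_natCast]
        exact pow_le_of_le_one (abs_nonneg _) (hΔle1 y hy) two_ne_zero
      have hroot : (∫ y, |w x y - w a y| ^ (2:ℝ) ∂μ) ^ ((1:ℝ)/2)
          ≤ (H a x) ^ ((1:ℝ)/2) :=
        Real.rpow_le_rpow
          (integral_nonneg fun y => Real.rpow_nonneg (abs_nonneg _) _)
          hI2 (by norm_num)
      exact mul_le_mul_of_nonneg_right hroot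
        (Real.rpow_nonneg (integral_nonneg fun y => Real.rpow_nonneg (abs_nonneg _) _) _)
    have := squeeze_zero_norm' hb ?_
    · have h2 := this.add_const (F a)
      rw [ContinuousWithinAt]
      simpa using h2
    · have : Filter.Tendsto (fun x => Real.sqrt (H a x))
          (nhdsWithin a (Set.Icc (0:ℝ) 1)) (nhds (Real.sqrt 0)) :=
        (Real.continuous_sqrt.tendsto 0).comp (hH_tendsto a ha)
      simpa using this.mul_const C
  -- conclude
  have : ∀ x ∈ Set.Icc (0:ℝ) 1, φ x = F x / (l * d x) := by
    intro x hx
    have hdx : d x ≠ 0 := (lt_of_lt_of_le hd₀ (hd_lb x hx)).ne'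
    have he := heig x hx
    rw [intervalIntegral.integral_of_le h01] at he
    rw [one_div_mul_eq_div, div_eq_iff hdx] at he
    have hFx : F x = l * φ x * d x := he
    rw [hFx]
    field_simp
  refine ContinuousOn.congr ?_ this
  exact hF_cont.div (continuousOn_const.mul hd_cont)
    (fun x hx => mul_ne_zero hl (lt_of_lt_of_le hd₀ (hd_lb x hx)).ne')
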